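/- Second addition theorem for Kummer's function: M(a,b,x+y) = e^y Σ_{n≥0} ((b−a)_n (−y)^n)/((b)_n n!) · M(a, b+n, x) for all complex x, y when b is not a nonpositive integer. -/

import Mathlib

open Finset

/-- The Pochhammer symbol (rising factorial) for complex arguments. -/
noncomputable def risingC (a : ℂ) (n : ℕ) : ℂ := ∏ i ∈ Finset.range n, (a + i)

/-- Kummer's confluent hypergeometric function of the first kind. -/
noncomputable def kummerM (a b z : ℂ) : ℂ :=
  ∑' n : ℕ, risingC a n / (risingC b n * n.factorial) * z ^ n

lemma risingC_zero (a : ℂ) : risingC a 0 = 1 := by simp [risingC]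

lemma risingC_succ (a : ℂ) (n : ℕ) : risingC a (n+1) = risingC a n * (a + n) := by
  simp [risingC, Finset.prod_range_succ]

lemma risingC_succ_left (a : ℂ) (n : ℕ) : risingC a (n+1) = a * risingC (a+1) n := by
  rw [risingC, Finset.prod_range_succ']
  have h1 : (∏ i ∈ Finset.range n, (a + ↑(i+1))) = risingC (a+1) n := by
    rw [risingC]; exact Finset.prod_congr rfl (by intros; push_cast; ring)
  rw [h1]; push_cast; ring

lemma risingC_add (a : ℂ) (m n : ℕ) :
    risingC a (m+n) = risingC a m * risingC (a + m) n := by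
  rw [risingC, Finset.prod_range_add, risingC, risingC]
  congr 1
  exact Finset.prod_congr rfl (by intros; push_cast; ring)

lemma risingC_ne_zero {b : ℂ} (hb : ∀ i : ℕ, b + i ≠ 0) (n : ℕ) : risingC b n ≠ 0 := by
  rw [risingC, Finset.prod_ne_zero_iff]
  exact fun i _ => hb i

lemma vander (j : ℕ) : ∀ u c : ℂ,
    ∑ n ∈ Finset.range (j+1),
      ((-1)^n * (j.choose n : ℂ) * risingC u n * risingC (c + n) (j - n))
      = risingC (c - u) j := by
  induction j with
  | zero => intro u c; simp [risingC]
  | succ j ih =>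
    intro u c
    rw [Finset.sum_range_succ']
    have hsplit : ∀ n ∈ Finset.range (j+1),
        ((-1:ℂ)^(n+1) * (((j+1).choose (n+1) : ℕ) : ℂ) * risingC u (n+1) *
            risingC (c + ↑(n+1)) (j + 1 - (n+1)))
        = (-u) * ((-1)^n * (j.choose n : ℂ) * risingC (u+1) n * risingC ((c+1) + n) (j - n))
          + ((-1)^(n+1) * (j.choose (n+1) : ℂ) * risingC u (n+1) *
              risingC (c + ↑(n+1)) (j + 1 - (n+1))) := by
      intro n hn
      rw [Nat.succ_sub_succ, Nat.choose_succ_succ, risingC_succ_left u n]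
      have h2 : c + ((n:ℂ) + 1) = (c+1) + (n:ℂ) := by ring
      push_cast
      rw [h2]
      ring
    rw [Finset.sum_congr rfl hsplit, Finset.sum_add_distrib, ← Finset.mul_sum, ih (u+1) (c+1)]
    have hcu : (c+1) - (u+1) = c - u := by ring
    rw [hcu, add_assoc]
    have hc0 : ((-1:ℂ)^0 * (((j+1).choose 0 : ℕ) : ℂ) * risingC u 0 * risingC (c + ((0:ℕ):ℂ)) (j+1-0))
        = ((-1:ℂ)^0 * ((j.choose 0 : ℕ) : ℂ) * risingC u 0 * risingC (c + ((0:ℕ):ℂ)) (j+1-0)) := by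
      simp
    rw [hc0,
      ← Finset.sum_range_succ' (fun m => ((-1:ℂ)^m * (j.choose m : ℂ) * risingC u m *
        risingC (c + m) (j + 1 - m))) (j+1), Finset.sum_range_succ]
    have hz : ((-1:ℂ)^(j+1) * (j.choose (j+1) : ℂ) * risingC u (j+1) *
        risingC (c + ↑(j+1)) (j + 1 - (j+1))) = 0 := by
      simp [Nat.choose_succ_self]
    rw [hz, add_zero]
    have hgm : ∀ m ∈ Finset.range (j+1),
        ((-1:ℂ)^m * (j.choose m : ℂ) * risingC u m * risingC (c + m) (j + 1 - m))
        = ((-1)^m * (j.choose m : ℂ) * risingC u m * risingC (c + m) (j - m)) * (c + (j:ℂ)) := by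
      intro m hm
      have hmle : m ≤ j := Nat.lt_succ_iff.mp (Finset.mem_range.mp hm)
      have h3 : j + 1 - m = (j - m) + 1 := by omega
      rw [h3, risingC_succ]
      have h4 : c + (m:ℂ) + ((j - m : ℕ) : ℂ) = c + (j:ℂ) := by
        rw [Nat.cast_sub hmle]; ring
      rw [h4]; ring
    rw [Finset.sum_congr rfl hgm, ← Finset.sum_mul, ih u c, risingC_succ]
    ring

noncomputable def Pr (s : ℝ) (n : ℕ) : ℝ := ∏ i ∈ Finset.range n, (s + i)

lemma Pr_pos {s : ℝ} (hs : 0 < s) (n : ℕ) : 0 < Pr s n :=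
  Finset.prod_pos (fun i _ => by positivity)

lemma norm_risingC_le (a : ℂ) {s : ℝ} (hs : ‖a‖ ≤ s) (n : ℕ) : ‖risingC a n‖ ≤ Pr s n := by
  rw [risingC, Pr, norm_prod]
  refine Finset.prod_le_prod (fun i _ => norm_nonneg _) (fun i _ => ?_)
  calc ‖a + (i:ℂ)‖ ≤ ‖a‖ + ‖((i:ℕ):ℂ)‖ := norm_add_le _ _
    _ ≤ s + i := by rw [Complex.norm_natCast]; linarith

lemma Pr_mul_le {s : ℝ} (hs : 1 ≤ s) (m n : ℕ) : Pr s m * Pr s n ≤ Pr s (m+n) := by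
  have h0 : (0:ℝ) < s := lt_of_lt_of_le one_pos hs
  rw [Pr, Pr, Pr, Finset.prod_range_add]
  refine mul_le_mul_of_nonneg_left (Finset.prod_le_prod (fun i _ => by positivity)
    (fun i _ => ?_)) (le_of_lt (Pr_pos h0 m))
  push_cast; linarith [Nat.cast_nonneg (α := ℝ) m]

lemma exists_ratio_bound (b : ℂ) (hb : ∀ i : ℕ, b + (i:ℂ) ≠ 0) (s : ℝ) (hs : 1 ≤ s) :
    ∃ C : ℝ, 0 < C ∧ ∀ N, Pr s N ≤ C * 2^N * ‖risingC b N‖ := by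
  have hbn : ∀ i : ℕ, 0 < ‖b + (i:ℂ)‖ := fun i => norm_pos_iff.mpr (hb i)
  set i0 := ⌈s + 2*‖b‖⌉₊ with hi0
  set f : ℕ → ℝ := fun i => max ((s+i)/(2*‖b+(i:ℂ)‖)) 1 with hf
  have hf1 : ∀ i, 1 ≤ f i := fun i => le_max_right _ _
  have hf0 : ∀ i, 0 ≤ f i := fun i => le_trans zero_le_one (hf1 i)
  have hfi0 : ∀ i, i0 ≤ i → f i = 1 := by
    intro i hi
    have h1 : s + 2*‖b‖ ≤ (i:ℝ) := le_trans (Nat.le_ceil _) (Nat.cast_le.mpr hi)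
    have h2 : (i:ℝ) - ‖b‖ ≤ ‖b + (i:ℂ)‖ := by
      have h3 : ‖((i:ℕ):ℂ)‖ ≤ ‖b + (i:ℂ)‖ + ‖b‖ := by
        calc ‖((i:ℕ):ℂ)‖ = ‖(b + (i:ℂ)) + (-b)‖ := by ring_nf
          _ ≤ ‖b + (i:ℂ)‖ + ‖-b‖ := norm_add_le _ _
          _ = ‖b + (i:ℂ)‖ + ‖b‖ := by rw [norm_neg]
      rw [Complex.norm_natCast] at h3
      linarith
    have h4 : s + (i:ℝ) ≤ 2*‖b + (i:ℂ)‖ := by linarith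
    exact max_eq_right ((div_le_one (mul_pos two_pos (hbn i))).mpr h4)
  refine ⟨∏ i ∈ Finset.range i0, f i, Finset.prod_pos (fun i _ => lt_of_lt_of_le one_pos (hf1 i)), ?_⟩
  intro N
  have hC : ∏ i ∈ Finset.range N, f i ≤ ∏ i ∈ Finset.range i0, f i := by
    rcases le_total N i0 with h | h
    · calc ∏ i ∈ Finset.range N, f i = (∏ i ∈ Finset.range N, f i) * 1 := (mul_one _).symm
        _ ≤ (∏ i ∈ Finset.range N, f i) * ∏ i ∈ Finset.Ico N i0, f i := by
            refine mul_le_mul_of_nonneg_left ?_ (Finset.prod_nonneg (fun i _ => hf0 i))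
            calc (1:ℝ) = ∏ _i ∈ Finset.Ico N i0, (1:ℝ) := by rw [Finset.prod_const_one]
              _ ≤ ∏ i ∈ Finset.Ico N i0, f i :=
                  Finset.prod_le_prod (fun i _ => zero_le_one) (fun i _ => hf1 i)
        _ = ∏ i ∈ Finset.range i0, f i := Finset.prod_range_mul_prod_Ico f h
    · rw [← Finset.prod_range_mul_prod_Ico f h,
        Finset.prod_eq_one (fun i hi => hfi0 i (Finset.mem_Ico.mp hi).1), mul_one]
  calc Pr s N ≤ ∏ i ∈ Finset.range N, (f i * (2*‖b+(i:ℂ)‖)) := by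
        rw [Pr]
        refine Finset.prod_le_prod (fun i _ => by positivity) (fun i _ => ?_)
        have hpos : (0:ℝ) < 2*‖b+(i:ℂ)‖ := mul_pos two_pos (hbn i)
        have := mul_le_mul_of_nonneg_right (le_max_left ((s+i)/(2*‖b+(i:ℂ)‖)) 1)
          (le_of_lt hpos)
        rwa [div_mul_cancel₀ _ (ne_of_gt hpos)] at this
    _ = (∏ i ∈ Finset.range N, f i) * ∏ i ∈ Finset.range N, (2*‖b+(i:ℂ)‖) :=
        Finset.prod_mul_distrib
    _ ≤ (∏ i ∈ Finset.range i0, f i) * ∏ i ∈ Finset.range N, (2*‖b+(i:ℂ)‖) :=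
        mul_le_mul_of_nonneg_right hC (Finset.prod_nonneg (fun i _ => by positivity))
    _ = (∏ i ∈ Finset.range i0, f i) * 2^N * ‖risingC b N‖ := by
        rw [Finset.prod_mul_distrib, Finset.prod_const, risingC, norm_prod, Finset.card_range,
          mul_assoc]

lemma expser_summable (C r : ℝ) : Summable (fun n : ℕ => C * r ^ n / (n.factorial : ℝ)) := by
  have := (Real.summable_pow_div_factorial r).mul_left C
  refine this.congr fun n => ?_
  rw [mul_div_assoc]

lemma expser_summable_norm (C r : ℝ) (hC : 0 ≤ C) (hr : 0 ≤ r) :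
    Summable (fun n : ℕ => ‖C * r ^ n / (n.factorial : ℝ)‖) := by
  refine (expser_summable C r).congr fun n => ?_
  rw [Real.norm_of_nonneg (by positivity)]

set_option maxHeartbeats 2000000 in
/-- Second addition theorem for Kummer's function:
`M(a,b,x+y) = e^y Σ_{n≥0} ((b−a)_n (−y)^n)/((b)_n n!) · M(a, b+n, x)`
whenever `b` is not a nonpositive integer. -/
theorem kummer_addition_second (a b x y : ℂ) (hb : ∀ n : ℕ, b ≠ -(n : ℂ)) :
    kummerM a b (x + y) = Complex.exp y *
      ∑' n : ℕ, risingC (b - a) n * (-y) ^ n / (risingC b n * n.factorial) *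
        kummerM a (b + n) x := by
  classical
  -- nonvanishing facts
  have hb' : ∀ i : ℕ, b + (i:ℂ) ≠ 0 := fun i h => hb i (by linear_combination h)
  have hbne : ∀ N, risingC b N ≠ 0 := risingC_ne_zero hb'
  have hbn' : ∀ n i : ℕ, (b + (n:ℂ)) + (i:ℂ) ≠ 0 := by
    intro n i h
    apply hb' (n + i)
    push_cast
    linear_combination h
  have hbnne : ∀ n N : ℕ, risingC (b + (n:ℂ)) N ≠ 0 := fun n => risingC_ne_zero (hbn' n)
  have hfc : ∀ n : ℕ, ((n.factorial : ℕ):ℂ) ≠ 0 :=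
    fun n => Nat.cast_ne_zero.mpr n.factorial_ne_zero
  have hfr : ∀ n : ℕ, (0:ℝ) < (n.factorial : ℝ) :=
    fun n => by exact_mod_cast n.factorial_pos
  -- growth constants
  set s : ℝ := max 1 (max ‖a‖ ‖b-a‖) with hsdef
  have hs1 : 1 ≤ s := le_max_left _ _
  have hs0 : 0 < s := lt_of_lt_of_le one_pos hs1
  have hsa : ‖a‖ ≤ s := le_trans (le_max_left _ _) (le_max_right _ _)
  have hsba : ‖b-a‖ ≤ s := le_trans (le_max_right _ _) (le_max_right _ _)
  obtain ⟨C, hC0, hCb⟩ := exists_ratio_bound b hb' s hs1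
  have hratio : ∀ N, ‖risingC a N‖ ≤ C * 2^N * ‖risingC b N‖ :=
    fun N => le_trans (norm_risingC_le a hsa N) (hCb N)
  have hpair : ∀ n k : ℕ, ‖risingC (b-a) n‖ * ‖risingC a k‖ ≤ C * 2^(n+k) * ‖risingC b (n+k)‖ := by
    intro n k
    calc ‖risingC (b-a) n‖ * ‖risingC a k‖ ≤ Pr s n * Pr s k :=
          mul_le_mul (norm_risingC_le _ hsba n) (norm_risingC_le _ hsa k)
            (norm_nonneg _) (le_of_lt (Pr_pos hs0 n))
      _ ≤ Pr s (n+k) := Pr_mul_le hs1 n k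
      _ ≤ C * 2^(n+k) * ‖risingC b (n+k)‖ := hCb (n+k)
  have hbnorm : ∀ N, (0:ℝ) < ‖risingC b N‖ := fun N => norm_pos_iff.mpr (hbne N)
  -- the master double-sum
  -- F (k, j)
  -- norm bound for F
  have hFnorm : ∀ p : ℕ × ℕ,
      ‖risingC a (p.1+p.2) / risingC b (p.1+p.2) * x^p.1 * y^p.2 /
        ((p.1.factorial : ℂ) * (p.2.factorial : ℂ))‖
      ≤ (C * (2*‖x‖)^p.1 / p.1.factorial) * (1 * (2*‖y‖)^p.2 / p.2.factorial) := by
    rintro ⟨k, j⟩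
    have h1 : ‖risingC a (k+j) / risingC b (k+j) * x^k * y^j /
        ((k.factorial : ℂ) * (j.factorial : ℂ))‖
        = (‖risingC a (k+j)‖ / ‖risingC b (k+j)‖) *
          (‖x‖^k * ‖y‖^j / ((k.factorial : ℝ) * (j.factorial : ℝ))) := by
      simp only [norm_div, norm_mul, norm_pow, Complex.norm_natCast]
      ring
    rw [h1]
    calc (‖risingC a (k+j)‖ / ‖risingC b (k+j)‖) *
          (‖x‖^k * ‖y‖^j / ((k.factorial : ℝ) * (j.factorial : ℝ)))
        ≤ (C * 2^(k+j)) * (‖x‖^k * ‖y‖^j / ((k.factorial : ℝ) * (j.factorial : ℝ))) := by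
          refine mul_le_mul_of_nonneg_right ?_ (by positivity)
          exact (div_le_iff₀ (hbnorm (k+j))).mpr (hratio (k+j))
      _ = (C * (2*‖x‖)^k / k.factorial) * (1 * (2*‖y‖)^j / j.factorial) := by
          rw [mul_pow, mul_pow, pow_add]; ring
  have hFsummable : Summable (fun p : ℕ × ℕ =>
      risingC a (p.1+p.2) / risingC b (p.1+p.2) * x^p.1 * y^p.2 /
        ((p.1.factorial : ℂ) * (p.2.factorial : ℂ))) := by
    refine Summable.of_norm_bounded ?_ hFnorm
    exact summable_mul_of_summable_norm
      (expser_summable_norm C (2*‖x‖) (le_of_lt hC0) (by positivity))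
      (expser_summable_norm 1 (2*‖y‖) zero_le_one (by positivity))
  -- norm bound for G
  have hGnorm : ∀ p : ℕ × ℕ,
      ‖(risingC (b-a) p.1 * (-y)^p.1 / (risingC b p.1 * (p.1.factorial : ℂ))) *
        (risingC a p.2 / (risingC (b + (p.1:ℂ)) p.2 * (p.2.factorial : ℂ)) * x^p.2)‖
      ≤ (C * (2*‖y‖)^p.1 / p.1.factorial) * (1 * (2*‖x‖)^p.2 / p.2.factorial) := by
    rintro ⟨n, k⟩
    have h1 : ‖(risingC (b-a) n * (-y)^n / (risingC b n * (n.factorial : ℂ))) *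
        (risingC a k / (risingC (b + (n:ℂ)) k * (k.factorial : ℂ)) * x^k)‖
        = (‖risingC (b-a) n‖ * ‖risingC a k‖ / ‖risingC b (n+k)‖) *
          (‖y‖^n * ‖x‖^k / ((n.factorial : ℝ) * (k.factorial : ℝ))) := by
      rw [risingC_add b n k]
      simp only [norm_div, norm_mul, norm_pow, Complex.norm_natCast, norm_neg]
      have h2 : ‖risingC b n‖ ≠ 0 := ne_of_gt (hbnorm n)
      have h3 : ‖risingC (b + (n:ℂ)) k‖ ≠ 0 := norm_ne_zero_iff.mpr (hbnne n k)
      field_simp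
    rw [h1]
    calc (‖risingC (b-a) n‖ * ‖risingC a k‖ / ‖risingC b (n+k)‖) *
          (‖y‖^n * ‖x‖^k / ((n.factorial : ℝ) * (k.factorial : ℝ)))
        ≤ (C * 2^(n+k)) * (‖y‖^n * ‖x‖^k / ((n.factorial : ℝ) * (k.factorial : ℝ))) := by
          refine mul_le_mul_of_nonneg_right ?_ (by positivity)
          exact (div_le_iff₀ (hbnorm (n+k))).mpr (hpair n k)
      _ = (C * (2*‖y‖)^n / n.factorial) * (1 * (2*‖x‖)^k / k.factorial) := by
          rw [mul_pow, mul_pow, pow_add]; ring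
  have hGsummable_norm : Summable (fun p : ℕ × ℕ =>
      ‖(risingC (b-a) p.1 * (-y)^p.1 / (risingC b p.1 * (p.1.factorial : ℂ))) *
        (risingC a p.2 / (risingC (b + (p.1:ℂ)) p.2 * (p.2.factorial : ℂ)) * x^p.2)‖) := by
    refine Summable.of_nonneg_of_le (fun _ => norm_nonneg _) hGnorm ?_
    exact summable_mul_of_summable_norm
      (expser_summable_norm C (2*‖y‖) (le_of_lt hC0) (by positivity))
      (expser_summable_norm 1 (2*‖x‖) zero_le_one (by positivity))
  have hGsummable : Summable (fun p : ℕ × ℕ =>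
      (risingC (b-a) p.1 * (-y)^p.1 / (risingC b p.1 * (p.1.factorial : ℂ))) *
        (risingC a p.2 / (risingC (b + (p.1:ℂ)) p.2 * (p.2.factorial : ℂ)) * x^p.2)) :=
    hGsummable_norm.of_norm
  have hEnorm : Summable (fun m : ℕ => ‖y^m / ((m.factorial : ℕ):ℂ)‖) := by
    refine (expser_summable 1 ‖y‖).congr fun m => ?_
    rw [norm_div, norm_pow, Complex.norm_natCast, one_mul]
  have hH : Summable (fun z : ℕ × (ℕ × ℕ) =>
      (y^z.1 / ((z.1.factorial : ℕ):ℂ)) *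
      ((risingC (b-a) z.2.1 * (-y)^z.2.1 / (risingC b z.2.1 * (z.2.1.factorial : ℂ))) *
        (risingC a z.2.2 / (risingC (b + (z.2.1:ℂ)) z.2.2 * (z.2.2.factorial : ℂ)) * x^z.2.2))) :=
    summable_mul_of_summable_norm
      (f := fun m : ℕ => y^m / ((m.factorial : ℕ):ℂ))
      (g := fun p : ℕ × ℕ =>
        (risingC (b-a) p.1 * (-y)^p.1 / (risingC b p.1 * (p.1.factorial : ℂ))) *
        (risingC a p.2 / (risingC (b + (p.1:ℂ)) p.2 * (p.2.factorial : ℂ)) * x^p.2))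
      hEnorm hGsummable_norm
  -- LHS as a double sum over pairs
  have hLHS : kummerM a b (x + y) = ∑' p : ℕ × ℕ,
      risingC a (p.1+p.2) / risingC b (p.1+p.2) * x^p.1 * y^p.2 /
        ((p.1.factorial : ℂ) * (p.2.factorial : ℂ)) := by
    have hsum' : Summable (fun q : (Σ N : ℕ, {p : ℕ × ℕ // p ∈ Finset.HasAntidiagonal.antidiagonal N}) =>
        risingC a ((q.2 : ℕ × ℕ).1+(q.2 : ℕ × ℕ).2) / risingC b ((q.2 : ℕ × ℕ).1+(q.2 : ℕ × ℕ).2) *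
          x^(q.2 : ℕ × ℕ).1 * y^(q.2 : ℕ × ℕ).2 /
        (((q.2 : ℕ × ℕ).1.factorial : ℂ) * ((q.2 : ℕ × ℕ).2.factorial : ℂ))) :=
      (Finset.HasAntidiagonal.sigmaAntidiagonalEquivProd (A := ℕ)).summable_iff.mpr hFsummable
    have hstep : (∑' p : ℕ × ℕ,
        risingC a (p.1+p.2) / risingC b (p.1+p.2) * x^p.1 * y^p.2 /
          ((p.1.factorial : ℂ) * (p.2.factorial : ℂ)))
        = ∑' N : ℕ, ∑' c : {p : ℕ × ℕ // p ∈ Finset.HasAntidiagonal.antidiagonal N},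
            risingC a ((c : ℕ × ℕ).1+(c : ℕ × ℕ).2) / risingC b ((c : ℕ × ℕ).1+(c : ℕ × ℕ).2) *
              x^(c : ℕ × ℕ).1 * y^(c : ℕ × ℕ).2 /
            (((c : ℕ × ℕ).1.factorial : ℂ) * ((c : ℕ × ℕ).2.factorial : ℂ)) :=
      (((Finset.HasAntidiagonal.sigmaAntidiagonalEquivProd (A := ℕ)).tsum_eq _).symm).trans (Summable.tsum_sigma hsum')
    rw [kummerM, hstep]
    refine tsum_congr fun N => ?_
    refine Eq.trans ?_ (Finset.tsum_subtype (Finset.HasAntidiagonal.antidiagonal N)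
      (fun p : ℕ × ℕ => risingC a (p.1+p.2) / risingC b (p.1+p.2) * x^p.1 * y^p.2 /
        ((p.1.factorial : ℂ) * (p.2.factorial : ℂ)))).symm
    rw [Finset.Nat.sum_antidiagonal_eq_sum_range_succ_mk, add_pow, Finset.mul_sum]
    refine Finset.sum_congr rfl fun i hi => ?_
    have hiN : i ≤ N := Nat.lt_succ_iff.mp (Finset.mem_range.mp hi)
    have hNi : i + (N - i) = N := Nat.add_sub_cancel' hiN
    have hcf : ((N.choose i : ℕ) : ℂ) * (i.factorial : ℂ) * ((N-i).factorial : ℂ)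
        = (N.factorial : ℂ) := by
      exact_mod_cast congrArg (Nat.cast : ℕ → ℂ) (Nat.choose_mul_factorial_mul_factorial hiN)
    show risingC a N / (risingC b N * (N.factorial : ℂ)) * (x ^ i * y ^ (N - i) * (N.choose i : ℕ))
        = risingC a (i+(N-i)) / risingC b (i+(N-i)) * x^i * y^(N-i) /
          ((i.factorial : ℂ) * ((N-i).factorial : ℂ))
    rw [hNi]
    rw [div_mul_eq_mul_div, div_mul_eq_mul_div, div_mul_eq_mul_div, div_div, div_eq_div_iff
      (mul_ne_zero (hbne N) (hfc N)) (mul_ne_zero (hbne N) (mul_ne_zero (hfc i) (hfc (N-i))))]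
    calc risingC a N * (x ^ i * y ^ (N - i) * ((N.choose i : ℕ):ℂ)) *
          (risingC b N * ((i.factorial : ℂ) * ((N-i).factorial : ℂ)))
        = risingC a N * x ^ i * y ^ (N - i) * risingC b N *
            (((N.choose i : ℕ):ℂ) * (i.factorial : ℂ) * ((N-i).factorial : ℂ)) := by ring
      _ = risingC a N * x ^ i * y ^ (N - i) * risingC b N * (N.factorial : ℂ) := by rw [hcf]
      _ = risingC a N * x ^ i * y ^ (N - i) * (risingC b N * (N.factorial : ℂ)) := by ring
  -- expand exp
  have hexp : Complex.exp y = ∑' m : ℕ, y^m / ((m.factorial : ℕ):ℂ) := by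
    rw [Complex.exp_eq_exp_ℂ, NormedSpace.exp_eq_tsum_div]
  -- inner sums of the RHS
  have hrhs1 : ∀ n : ℕ, kummerM a (b + (n:ℂ)) x
      = ∑' k : ℕ, risingC a k / (risingC (b + (n:ℂ)) k * (k.factorial : ℂ)) * x^k := fun n => rfl
  have h2 : (∑' n : ℕ, risingC (b - a) n * (-y) ^ n / (risingC b n * (n.factorial : ℂ)) *
        kummerM a (b + (n:ℂ)) x)
      = ∑' p : ℕ × ℕ, (risingC (b-a) p.1 * (-y)^p.1 / (risingC b p.1 * (p.1.factorial : ℂ))) *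
          (risingC a p.2 / (risingC (b + (p.1:ℂ)) p.2 * (p.2.factorial : ℂ)) * x^p.2) := by
    rw [Summable.tsum_prod' hGsummable hGsummable.prod_factor]
    refine tsum_congr fun n => ?_
    rw [hrhs1 n, ← tsum_mul_left]
  -- combine with exp into a triple sum
  have h3 : Complex.exp y *
        (∑' n : ℕ, risingC (b - a) n * (-y) ^ n / (risingC b n * (n.factorial : ℂ)) *
          kummerM a (b + (n:ℂ)) x)
      = ∑' z : ℕ × (ℕ × ℕ), (y^z.1 / ((z.1.factorial : ℕ):ℂ)) *
          ((risingC (b-a) z.2.1 * (-y)^z.2.1 / (risingC b z.2.1 * (z.2.1.factorial : ℂ))) *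
            (risingC a z.2.2 / (risingC (b + (z.2.1:ℂ)) z.2.2 * (z.2.2.factorial : ℂ)) * x^z.2.2)) := by
    rw [hexp, h2]
    exact tsum_mul_tsum_of_summable_norm hEnorm hGsummable_norm
  -- reindex the triple sum
  let e2 : (ℕ × (ℕ × ℕ)) ≃ (ℕ × (ℕ × ℕ)) :=
    ⟨fun z => (z.2.1, (z.2.2, z.1)), fun w => (w.2.2, (w.1, w.2.1)),
      fun _ => rfl, fun _ => rfl⟩
  have h4 : (∑' z : ℕ × (ℕ × ℕ), (y^z.1 / ((z.1.factorial : ℕ):ℂ)) *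
          ((risingC (b-a) z.2.1 * (-y)^z.2.1 / (risingC b z.2.1 * (z.2.1.factorial : ℂ))) *
            (risingC a z.2.2 / (risingC (b + (z.2.1:ℂ)) z.2.2 * (z.2.2.factorial : ℂ)) * x^z.2.2)))
      = ∑' w : ℕ × (ℕ × ℕ), (y^w.2.1 / ((w.2.1.factorial : ℕ):ℂ)) *
          ((risingC (b-a) w.2.2 * (-y)^w.2.2 / (risingC b w.2.2 * (w.2.2.factorial : ℂ))) *
            (risingC a w.1 / (risingC (b + (w.2.2:ℂ)) w.1 * (w.1.factorial : ℂ)) * x^w.1)) :=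
    (e2.tsum_eq (fun z : ℕ × (ℕ × ℕ) => (y^z.1 / ((z.1.factorial : ℕ):ℂ)) *
          ((risingC (b-a) z.2.1 * (-y)^z.2.1 / (risingC b z.2.1 * (z.2.1.factorial : ℂ))) *
            (risingC a z.2.2 / (risingC (b + (z.2.1:ℂ)) z.2.2 * (z.2.2.factorial : ℂ)) * x^z.2.2)))).symm
  have h5 : Summable (fun w : ℕ × (ℕ × ℕ) => (y^w.2.1 / ((w.2.1.factorial : ℕ):ℂ)) *
          ((risingC (b-a) w.2.2 * (-y)^w.2.2 / (risingC b w.2.2 * (w.2.2.factorial : ℂ))) *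
            (risingC a w.1 / (risingC (b + (w.2.2:ℂ)) w.1 * (w.1.factorial : ℂ)) * x^w.1))) :=
    e2.summable_iff.mpr hH
  have h6 : (∑' w : ℕ × (ℕ × ℕ), (y^w.2.1 / ((w.2.1.factorial : ℕ):ℂ)) *
          ((risingC (b-a) w.2.2 * (-y)^w.2.2 / (risingC b w.2.2 * (w.2.2.factorial : ℂ))) *
            (risingC a w.1 / (risingC (b + (w.2.2:ℂ)) w.1 * (w.1.factorial : ℂ)) * x^w.1)))
      = ∑' k : ℕ, ∑' mn : ℕ × ℕ, (y^mn.1 / ((mn.1.factorial : ℕ):ℂ)) *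
          ((risingC (b-a) mn.2 * (-y)^mn.2 / (risingC b mn.2 * (mn.2.factorial : ℂ))) *
            (risingC a k / (risingC (b + (mn.2:ℂ)) k * (k.factorial : ℂ)) * x^k)) :=
    Summable.tsum_prod' h5 h5.prod_factor
  -- for each k, group the (m, n) sum along antidiagonals
  have h7 : ∀ k : ℕ, (∑' mn : ℕ × ℕ, (y^mn.1 / ((mn.1.factorial : ℕ):ℂ)) *
          ((risingC (b-a) mn.2 * (-y)^mn.2 / (risingC b mn.2 * (mn.2.factorial : ℂ))) *
            (risingC a k / (risingC (b + (mn.2:ℂ)) k * (k.factorial : ℂ)) * x^k)))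
      = ∑' j : ℕ, risingC a (k+j) / risingC b (k+j) * x^k * y^j /
          ((k.factorial : ℂ) * (j.factorial : ℂ)) := by
    intro k
    have hk : Summable (fun mn : ℕ × ℕ => (y^mn.1 / ((mn.1.factorial : ℕ):ℂ)) *
          ((risingC (b-a) mn.2 * (-y)^mn.2 / (risingC b mn.2 * (mn.2.factorial : ℂ))) *
            (risingC a k / (risingC (b + (mn.2:ℂ)) k * (k.factorial : ℂ)) * x^k))) :=
      h5.prod_factor k
    have hsum'' : Summable (fun q : (Σ j : ℕ, {p : ℕ × ℕ // p ∈ Finset.HasAntidiagonal.antidiagonal j}) =>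
        (y^(q.2 : ℕ × ℕ).1 / (((q.2 : ℕ × ℕ).1.factorial : ℕ):ℂ)) *
          ((risingC (b-a) (q.2 : ℕ × ℕ).2 * (-y)^(q.2 : ℕ × ℕ).2 /
              (risingC b (q.2 : ℕ × ℕ).2 * ((q.2 : ℕ × ℕ).2.factorial : ℂ))) *
            (risingC a k / (risingC (b + ((q.2 : ℕ × ℕ).2:ℂ)) k * (k.factorial : ℂ)) * x^k))) :=
      (Finset.HasAntidiagonal.sigmaAntidiagonalEquivProd (A := ℕ)).summable_iff.mpr hk
    have hstep2 : (∑' mn : ℕ × ℕ, (y^mn.1 / ((mn.1.factorial : ℕ):ℂ)) *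
          ((risingC (b-a) mn.2 * (-y)^mn.2 / (risingC b mn.2 * (mn.2.factorial : ℂ))) *
            (risingC a k / (risingC (b + (mn.2:ℂ)) k * (k.factorial : ℂ)) * x^k)))
        = ∑' j : ℕ, ∑' c : {p : ℕ × ℕ // p ∈ Finset.HasAntidiagonal.antidiagonal j},
            (y^(c : ℕ × ℕ).1 / (((c : ℕ × ℕ).1.factorial : ℕ):ℂ)) *
              ((risingC (b-a) (c : ℕ × ℕ).2 * (-y)^(c : ℕ × ℕ).2 /
                  (risingC b (c : ℕ × ℕ).2 * ((c : ℕ × ℕ).2.factorial : ℂ))) *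
                (risingC a k / (risingC (b + ((c : ℕ × ℕ).2:ℂ)) k * (k.factorial : ℂ)) * x^k)) :=
      (((Finset.HasAntidiagonal.sigmaAntidiagonalEquivProd (A := ℕ)).tsum_eq _).symm).trans (Summable.tsum_sigma hsum'')
    rw [hstep2]
    refine tsum_congr fun j => ?_
    refine Eq.trans (Eq.trans (Finset.tsum_subtype (Finset.HasAntidiagonal.antidiagonal j)
      (fun mn : ℕ × ℕ => (y^mn.1 / ((mn.1.factorial : ℕ):ℂ)) *
          ((risingC (b-a) mn.2 * (-y)^mn.2 / (risingC b mn.2 * (mn.2.factorial : ℂ))) *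
            (risingC a k / (risingC (b + (mn.2:ℂ)) k * (k.factorial : ℂ)) * x^k)))) ?_) rfl
    rw [Finset.Nat.sum_antidiagonal_eq_sum_range_succ_mk]
    -- reflect the sum
    have hrefl : ∀ i ∈ Finset.range (j+1),
        (y^i / ((i.factorial : ℕ):ℂ)) *
          ((risingC (b-a) (j-i) * (-y)^(j-i) / (risingC b (j-i) * ((j-i).factorial : ℂ))) *
            (risingC a k / (risingC (b + ((j-i:ℕ):ℂ)) k * (k.factorial : ℂ)) * x^k))
        = (fun n => (y^(j-n) / (((j-n).factorial : ℕ):ℂ)) *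
          ((risingC (b-a) n * (-y)^n / (risingC b n * (n.factorial : ℂ))) *
            (risingC a k / (risingC (b + ((n:ℕ):ℂ)) k * (k.factorial : ℂ)) * x^k))) (j + 1 - 1 - i) := by
      intro i hi
      have hij : i ≤ j := Nat.lt_succ_iff.mp (Finset.mem_range.mp hi)
      simp only [Nat.add_sub_cancel, Nat.sub_sub_self hij]
    refine Eq.trans (Finset.sum_congr rfl hrefl)
      (Eq.trans (Finset.sum_range_reflect (fun n => (y^(j-n) / (((j-n).factorial : ℕ):ℂ)) *
          ((risingC (b-a) n * (-y)^n / (risingC b n * (n.factorial : ℂ))) *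
            (risingC a k / (risingC (b + ((n:ℕ):ℂ)) k * (k.factorial : ℂ)) * x^k))) (j+1)) ?_)
    -- evaluate each term
    have key : ∀ n ∈ Finset.range (j+1),
        (y^(j-n) / (((j-n).factorial : ℕ):ℂ)) *
          ((risingC (b-a) n * (-y)^n / (risingC b n * (n.factorial : ℂ))) *
            (risingC a k / (risingC (b + ((n:ℕ):ℂ)) k * (k.factorial : ℂ)) * x^k))
        = (risingC a k * x^k * y^j / (risingC b (k+j) * (k.factorial : ℂ) * (j.factorial : ℂ))) *
          ((-1)^n * (j.choose n : ℂ) * risingC (b-a) n * risingC ((b + (k:ℂ)) + (n:ℂ)) (j-n)) := by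
      intro n hn
      have hnj : n ≤ j := Nat.lt_succ_iff.mp (Finset.mem_range.mp hn)
      have hfacj : (j.factorial : ℂ) = (j.choose n : ℕ) * (n.factorial : ℂ) * ((j-n).factorial : ℂ) := by
        exact_mod_cast congrArg (Nat.cast : ℕ → ℂ)
          (Nat.choose_mul_factorial_mul_factorial hnj).symm
      have hbsplit : risingC b (k+j)
          = risingC b n * risingC (b + (n:ℂ)) k * risingC ((b + (k:ℂ)) + (n:ℂ)) (j-n) := by
        have h8 : k + j = (n+k) + (j-n) := by omega
        rw [h8, risingC_add b (n+k) (j-n), risingC_add b n k]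
        have h9 : b + ((n+k : ℕ):ℂ) = (b + (k:ℂ)) + (n:ℂ) := by push_cast; ring
        rw [h9]
      have hy : y^(j-n) * y^n = y^j := by
        rw [← pow_add, Nat.sub_add_cancel hnj]
      rw [neg_pow y n]
      have L : (y^(j-n) / (((j-n).factorial : ℕ):ℂ)) *
          ((risingC (b-a) n * ((-1)^n * y^n) / (risingC b n * (n.factorial : ℂ))) *
            (risingC a k / (risingC (b + ((n:ℕ):ℂ)) k * (k.factorial : ℂ)) * x^k))
          = (y^(j-n) * y^n * (-1)^n * risingC (b-a) n * risingC a k * x^k) /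
            ((((j-n).factorial : ℂ) * ((n.factorial : ℂ) * (k.factorial : ℂ))) *
              (risingC b n * risingC (b + (n:ℂ)) k)) := by ring
      have R : (risingC a k * x^k * y^j / (risingC b (k+j) * (k.factorial : ℂ) * (j.factorial : ℂ))) *
          ((-1)^n * (j.choose n : ℂ) * risingC (b-a) n * risingC ((b + (k:ℂ)) + (n:ℂ)) (j-n))
          = (y^j * (-1)^n * (j.choose n : ℂ) * risingC (b-a) n *
              risingC ((b + (k:ℂ)) + (n:ℂ)) (j-n) * risingC a k * x^k) /
            (risingC b (k+j) * (k.factorial : ℂ) * (j.factorial : ℂ)) := by ring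
      rw [L, R, div_eq_div_iff
        (mul_ne_zero (mul_ne_zero (hfc (j-n)) (mul_ne_zero (hfc n) (hfc k)))
          (mul_ne_zero (hbne n) (hbnne n k)))
        (mul_ne_zero (mul_ne_zero (hbne (k+j)) (hfc k)) (hfc j))]
      rw [hbsplit, hfacj, ← hy]
      ring
    rw [Finset.sum_congr rfl key, ← Finset.mul_sum, vander j (b-a) (b + (k:ℂ))]
    have h10 : b + (k:ℂ) - (b - a) = a + (k:ℂ) := by ring
    rw [h10, risingC_add a k j]
    ring
  -- put everything together
  rw [hLHS, h3, h4, h6, tsum_congr h7]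
  exact Summable.tsum_prod' hFsummable hFsummable.prod_factor
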